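/- Let R be a simple ring with identity (nontrivial, only two-sided ideals 0 and R) of characteristic p for a prime p, endowed with a nondiscrete Hausdorff locally compact ring topology. Let V be a compact open (nonunital) subring of R and let (e_α)_{α∈Ω} be a family of nonzero idempotents of R that are pairwise orthogonal (e_α·e_β = 0 for α ≠ β). Then the cardinality of Ω is at most the weight of V; concretely, for every family 𝔅 of open subsets of the subspace V that forms a base of the subspace topology of V, one has #Ω ≤ #𝔅. -/

import Mathlib

universe u v

/-- In a simple nondiscrete topological ring, nothing nonzero is annihilated on the
left by a whole neighborhood of zero. -/
theorem exists_mul_ne_zero_of_nhds {R : Type u} [Ring R] [IsSimpleRing R]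
    [TopologicalSpace R] [IsTopologicalRing R]
    (hnd : ¬ DiscreteTopology R) {c : R} (hc : c ≠ 0) {W : Set R} (hW : W ∈ nhds (0 : R)) :
    ∃ w ∈ W, w * c ≠ 0 := by
  by_contra h
  push_neg at h
  -- the set of elements annihilated on the left by a neighborhood of zero
  -- is a two-sided ideal
  set T : TwoSidedIdeal R := TwoSidedIdeal.mk'
    {x : R | ∃ U ∈ nhds (0 : R), ∀ u ∈ U, u * x = 0}
    ⟨Set.univ, Filter.univ_mem, fun u _ => mul_zero u⟩
    (fun {x y} ⟨U, hU, hUx⟩ ⟨U', hU', hU'y⟩ =>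
      ⟨U ∩ U', Filter.inter_mem hU hU', fun u hu => by
        rw [mul_add, hUx u hu.1, hU'y u hu.2, add_zero]⟩)
    (fun {x} ⟨U, hU, hUx⟩ => ⟨U, hU, fun u hu => by rw [mul_neg, hUx u hu, neg_zero]⟩)
    (fun {x y} ⟨U, hU, hUy⟩ => by
      refine ⟨(fun u => u * x) ⁻¹' U, ?_, fun u hu => by
        rw [← mul_assoc]; exact hUy _ hu⟩
      have : Continuous fun u : R => u * x := continuous_mul_right x
      have h0 : (fun u : R => u * x) 0 = 0 := zero_mul x
      exact this.continuousAt.preimage_mem_nhds (by rwa [zero_mul x]))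
    (fun {x y} ⟨U, hU, hUx⟩ => ⟨U, hU, fun u hu => by rw [← mul_assoc, hUx u hu, zero_mul]⟩)
    with hT
  have hcT : c ∈ T := by
    rw [hT, TwoSidedIdeal.mem_mk']
    exact ⟨W, hW, h⟩
  have h1 : (1 : R) ∈ T := IsSimpleRing.one_mem_of_ne_zero_mem T hc hcT
  rw [hT, TwoSidedIdeal.mem_mk'] at h1
  obtain ⟨U, hU, hU1⟩ := h1
  have hU0 : U ⊆ {(0 : R)} := fun u hu => by simpa using hU1 u hu
  apply hnd
  rw [discreteTopology_iff_isOpen_singleton_zero]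
  have : {(0 : R)} ∈ nhds (0 : R) := Filter.mem_of_superset hU hU0
  rcases mem_nhds_iff.mp this with ⟨O, hO, hOopen, h0O⟩
  have : O = {(0 : R)} := le_antisymm hO (by simpa using h0O)
  rwa [← this]

/-- In a simple nondiscrete locally compact Hausdorff topological ring of prime
characteristic `p` with identity, any family of nonzero pairwise orthogonal
idempotents has cardinality at most the weight of any compact open subring `V`:
the index set injects cardinality-wise into any base of the subspace topology
of `V`. -/
theorem card_orthogonal_idempotents_le_weight {R : Type u} [Ring R] [IsSimpleRing R]
    [TopologicalSpace R] [IsTopologicalRing R] [T2Space R] [LocallyCompactSpace R]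
    (hnd : ¬ DiscreteTopology R) (p : ℕ) (hp : p.Prime) [CharP R p]
    (V : NonUnitalSubring R) (hVc : IsCompact (V : Set R)) (hVo : IsOpen (V : Set R))
    {Ω : Type v} (e : Ω → R)
    (hidem : ∀ α, e α * e α = e α)
    (hne : ∀ α, e α ≠ 0)
    (horth : ∀ α β, α ≠ β → e α * e β = 0)
    (𝔅 : Set (Set V)) (h𝔅 : TopologicalSpace.IsTopologicalBasis 𝔅) :
    Cardinal.lift.{u} (Cardinal.mk Ω) ≤ Cardinal.lift.{v} (Cardinal.mk 𝔅) := by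
  -- For each α, find a nonzero element v α of V of the form w * e α.
  have key : ∀ α : Ω, ∃ v : V, (v : R) * e α ≠ 0 ∧ ∀ β, β ≠ α → (v : R) * e β = 0 := by
    intro α
    have hcont : Continuous fun w : R => w * e α := continuous_mul_right (e α)
    have hWnhds : (fun w : R => w * e α) ⁻¹' (V : Set R) ∈ nhds (0 : R) := by
      refine hcont.continuousAt.preimage_mem_nhds ?_
      have h0 : (fun w : R => w * e α) 0 = 0 := zero_mul (e α)
      rw [zero_mul (e α)]
      exact hVo.mem_nhds (zero_mem V)
    obtain ⟨w, hwV, hwne⟩ := exists_mul_ne_zero_of_nhds hnd (hne α) hWnhds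
    refine ⟨⟨w * e α, hwV⟩, ?_, ?_⟩
    · show w * e α * e α ≠ 0
      rwa [mul_assoc, hidem α]
    · intro β hβ
      show w * e α * e β = 0
      rw [mul_assoc, horth α β (Ne.symm hβ), mul_zero]
  choose v hv hv' using key
  -- The set of points of V not annihilating e α on the left is open in V.
  have hUopen : ∀ α : Ω, IsOpen {x : V | (x : R) * e α ≠ 0} := by
    intro α
    have hcont : Continuous fun x : V => (x : R) * e α :=
      (continuous_mul_right (e α)).comp continuous_subtype_val
    exact (isClosed_singleton.preimage hcont).isOpen_compl
  -- Choose for each α a basis element around v α inside that open set.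
  have hB : ∀ α : Ω, ∃ B ∈ 𝔅, v α ∈ B ∧ B ⊆ {x : V | (x : R) * e α ≠ 0} :=
    fun α => h𝔅.exists_subset_of_mem_open (hv α) (hUopen α)
  choose B hBmem hBv hBsub using hB
  have hinj : Function.Injective fun α : Ω => (⟨B α, hBmem α⟩ : 𝔅) := by
    intro α β hαβ
    by_contra hne'
    have : v β ∈ B α := by
      have : B α = B β := congrArg Subtype.val hαβ
      rw [this]; exact hBv β
    exact hBsub α this (hv' β α hne')
  exact Cardinal.lift_mk_le'.mpr ⟨⟨_, hinj⟩⟩
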